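/- The integral over X from 0 to ∞ of (1/√π)·(2√X(X+1) − e^X √π X(2X+3)(1 − erf(√X))) equals 1. -/

import Mathlib

open Real MeasureTheory

/-- The Gauss error function. -/
noncomputable def erf (t : ℝ) : ℝ := (2 / Real.sqrt π) * ∫ s in (0 : ℝ)..t, Real.exp (-s ^ 2)


lemma gcont : Continuous fun s : ℝ => Real.exp (-s ^ 2) := by continuity

lemma gint : Integrable fun s : ℝ => Real.exp (-s ^ 2) := by
  simpa using integrable_exp_neg_mul_sq (one_pos)

lemma erf_hasDerivAt (t : ℝ) :
    HasDerivAt erf (2 / Real.sqrt π * Real.exp (-t ^ 2)) t := by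
  have h : HasDerivAt (fun u => ∫ s in (0:ℝ)..u, Real.exp (-s ^ 2)) (Real.exp (-t ^ 2)) t :=
    intervalIntegral.integral_hasDerivAt_right gint.intervalIntegrable
      (gcont.stronglyMeasurableAtFilter _ _) gcont.continuousAt
  exact h.const_mul (2 / Real.sqrt π)

lemma continuous_erf : Continuous erf :=
  continuous_iff_continuousAt.2 fun t => (erf_hasDerivAt t).continuousAt

lemma erf_zero : erf 0 = 0 := by simp [erf]

noncomputable def Ig (t : ℝ) : ℝ := ∫ s in Set.Ioi t, Real.exp (-s ^ 2)

lemma Ig_zero : Ig 0 = Real.sqrt π / 2 := by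
  have := integral_gaussian_Ioi 1
  simpa [Ig] using this

lemma Ig_nonneg (t : ℝ) : 0 ≤ Ig t :=
  setIntegral_nonneg measurableSet_Ioi fun s _ => (Real.exp_pos _).le

lemma one_sub_erf (t : ℝ) (ht : 0 ≤ t) : 1 - erf t = 2 / Real.sqrt π * Ig t := by
  have hsplit : Ig 0 = (∫ s in (0:ℝ)..t, Real.exp (-s ^ 2)) + Ig t := by
    rw [intervalIntegral.integral_of_le ht, Ig, Ig,
      ← setIntegral_union (Set.Ioc_disjoint_Ioi le_rfl) measurableSet_Ioi
        (gint.integrableOn) (gint.integrableOn),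
      Set.Ioc_union_Ioi_eq_Ioi ht]
  have hπ : Real.sqrt π ≠ 0 := by
    positivity
  rw [erf]
  have h := hsplit
  rw [Ig_zero] at h
  field_simp
  nlinarith [h]
/-- upper bound function for the Gaussian tail -/
noncomputable def Au (t : ℝ) : ℝ := Real.exp (-t ^ 2) * ((4*t^4 - 2*t^2 + 3) / (8*t^5))
/-- lower bound function for the Gaussian tail -/
noncomputable def Bl (t : ℝ) : ℝ := Real.exp (-t ^ 2) * ((8*t^6 - 4*t^4 + 6*t^2 - 15) / (16*t^7))

lemma hasDerivAt_exp_neg_sq (s : ℝ) :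
    HasDerivAt (fun x : ℝ => Real.exp (-x ^ 2)) (Real.exp (-s ^ 2) * (-(2*s))) s := by
  have h := (hasDerivAt_pow 2 s).neg
  have := h.exp
  refine this.congr_deriv ?_
  simp only [Pi.neg_apply]
  push_cast
  ring

lemma hasDerivAt_neg_Au (s : ℝ) (hs : s ≠ 0) :
    HasDerivAt (fun x => -(Au x)) (Real.exp (-s ^ 2) * ((8*s^6 + 15) / (8*s^6))) s := by
  have hp : HasDerivAt (fun x : ℝ => 4*x^4 - 2*x^2 + 3) (16*s^3 - 4*s) s := by
    have := (((hasDerivAt_pow 4 s).const_mul 4).sub ((hasDerivAt_pow 2 s).const_mul 2)).add_const 3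
    exact this.congr_deriv (by push_cast; ring)
  have hq : HasDerivAt (fun x : ℝ => 8*x^5) (8*(5*s^4)) s := by
    have := (hasDerivAt_pow 5 s).const_mul 8
    exact this.congr_deriv (by push_cast; ring)
  have hq0 : 8*s^5 ≠ 0 := by simp [pow_ne_zero, hs]
  have h := ((hasDerivAt_exp_neg_sq s).mul (hp.div hq hq0)).neg
  refine h.congr_deriv ?_
  simp only [Pi.div_apply]
  have h2 : (8:ℝ)*s^5 ≠ 0 := hq0
  field_simp
  ring

lemma hasDerivAt_neg_Bl (s : ℝ) (hs : s ≠ 0) :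
    HasDerivAt (fun x => -(Bl x)) (Real.exp (-s ^ 2) * ((16*s^8 - 105) / (16*s^8))) s := by
  have hp : HasDerivAt (fun x : ℝ => 8*x^6 - 4*x^4 + 6*x^2 - 15)
      (8*(6*s^5) - 4*(4*s^3) + 6*(2*s)) s := by
    have := ((((hasDerivAt_pow 6 s).const_mul 8).sub ((hasDerivAt_pow 4 s).const_mul 4)).add
      ((hasDerivAt_pow 2 s).const_mul 6)).sub_const 15
    exact this.congr_deriv (by push_cast; ring)
  have hq : HasDerivAt (fun x : ℝ => 16*x^7) (16*(7*s^6)) s := by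
    have := (hasDerivAt_pow 7 s).const_mul 16
    exact this.congr_deriv (by push_cast; ring)
  have hq0 : (16:ℝ)*s^7 ≠ 0 := by simp [pow_ne_zero, hs]
  have h := ((hasDerivAt_exp_neg_sq s).mul (hp.div hq hq0)).neg
  refine h.congr_deriv ?_
  simp only [Pi.div_apply]
  field_simp
  ring

lemma tendsto_exp_neg_sq : Filter.Tendsto (fun t : ℝ => Real.exp (-t ^ 2)) Filter.atTop (nhds 0) := by
  apply Real.tendsto_exp_atBot.comp
  rw [Filter.tendsto_neg_atBot_iff]
  exact Filter.tendsto_pow_atTop two_ne_zero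

lemma tendsto_Au : Filter.Tendsto Au Filter.atTop (nhds 0) := by
  refine squeeze_zero_norm' (a := fun t : ℝ => Real.exp (-t ^ 2)) ?_ tendsto_exp_neg_sq
  filter_upwards [Filter.eventually_ge_atTop (1:ℝ)] with t ht
  have h1 : 0 < t := lt_of_lt_of_le one_pos ht
  have h5 : (0:ℝ) < 8*t^5 := by positivity
  have hfr : |(4*t^4 - 2*t^2 + 3) / (8*t^5)| ≤ 1 := by
    rw [abs_div, div_le_one (by positivity)]
    have e4 : t^4 ≤ t^5 := pow_le_pow_right₀ ht (by norm_num)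
    have e2 : t^2 ≤ t^5 := pow_le_pow_right₀ ht (by norm_num)
    have e0 : (1:ℝ) ≤ t^5 := one_le_pow₀ ht
    rw [abs_of_pos (by nlinarith [sq_nonneg t, sq_nonneg (t^2-1)] : (0:ℝ) < 4*t^4 - 2*t^2 + 3), abs_of_pos h5]
    nlinarith [sq_nonneg t]
  have : |Au t| ≤ Real.exp (-t^2) * 1 := by
    rw [Au, abs_mul, abs_of_pos (Real.exp_pos _)]
    exact mul_le_mul_of_nonneg_left hfr (Real.exp_pos _).le
  simpa using this


lemma tendsto_Bl : Filter.Tendsto Bl Filter.atTop (nhds 0) := by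
  refine squeeze_zero_norm' (a := fun t : ℝ => Real.exp (-t ^ 2)) ?_ tendsto_exp_neg_sq
  filter_upwards [Filter.eventually_ge_atTop (2:ℝ)] with t ht
  have h1 : 0 < t := lt_of_lt_of_le two_pos ht
  have h5 : (0:ℝ) < 16*t^7 := by positivity
  have hfr : |(8*t^6 - 4*t^4 + 6*t^2 - 15) / (16*t^7)| ≤ 1 := by
    rw [abs_div, div_le_one (by positivity)]
    have e6 : t^6 ≤ t^7 := pow_le_pow_right₀ (by linarith : (1:ℝ) ≤ t) (by norm_num)
    have e4 : t^4 ≤ t^6 := pow_le_pow_right₀ (by linarith : (1:ℝ) ≤ t) (by norm_num)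
    have e2 : (4:ℝ) ≤ t^2 := by nlinarith
    have e24 : 4*t^4 ≤ t^6 := by nlinarith [pow_nonneg (le_of_lt h1) 4, sq_nonneg (t^2)]
    have e0 : (1:ℝ) ≤ t^6 := one_le_pow₀ (by linarith)
    rw [abs_of_pos (by nlinarith [sq_nonneg t] : (0:ℝ) < 8*t^6 - 4*t^4 + 6*t^2 - 15), abs_of_pos h5]
    nlinarith [sq_nonneg t, pow_nonneg (le_of_lt h1) 6, pow_nonneg (le_of_lt h1) 7]
  have : |Bl t| ≤ Real.exp (-t^2) * 1 := by
    rw [Bl, abs_mul, abs_of_pos (Real.exp_pos _)]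
    exact mul_le_mul_of_nonneg_left hfr (Real.exp_pos _).le
  simpa using this


lemma Ig_le_Au (t : ℝ) (ht : 0 < t) : Ig t ≤ Au t := by
  have hderiv : ∀ x ∈ Set.Ici t, HasDerivAt (fun s => -(Au s))
      (Real.exp (-x ^ 2) * ((8*x^6 + 15) / (8*x^6))) x :=
    fun x hx => hasDerivAt_neg_Au x (ne_of_gt (lt_of_lt_of_le ht hx))
  have hpos : ∀ x ∈ Set.Ioi t, 0 ≤ Real.exp (-x ^ 2) * ((8*x^6 + 15) / (8*x^6)) := by
    intro x hx
    have hx0 : 0 < x := ht.trans hx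
    positivity
  have htend : Filter.Tendsto (fun s => -(Au s)) Filter.atTop (nhds 0) := by
    simpa using tendsto_Au.neg
  have hkey := integral_Ioi_of_hasDerivAt_of_nonneg' hderiv hpos htend
  have hint : IntegrableOn (fun x => Real.exp (-x ^ 2) * ((8*x^6 + 15) / (8*x^6)))
      (Set.Ioi t) := integrableOn_Ioi_deriv_of_nonneg' hderiv hpos htend
  have hmono : Ig t ≤ ∫ x in Set.Ioi t, Real.exp (-x ^ 2) * ((8*x^6 + 15) / (8*x^6)) := by
    apply setIntegral_mono_on gint.integrableOn hint measurableSet_Ioi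
    intro x hx
    have hx0 : 0 < x := ht.trans hx
    have : (1:ℝ) ≤ (8*x^6 + 15) / (8*x^6) := by
      rw [le_div_iff₀ (by positivity)]
      nlinarith
    nlinarith [Real.exp_pos (-x^2), mul_le_mul_of_nonneg_left this (Real.exp_pos (-x^2)).le]
  rw [hkey] at hmono
  simpa using hmono

lemma Bl_le_Ig (t : ℝ) (ht : 2 ≤ t) : Bl t ≤ Ig t := by
  have ht0 : 0 < t := lt_of_lt_of_le two_pos ht
  have hderiv : ∀ x ∈ Set.Ici t, HasDerivAt (fun s => -(Bl s))
      (Real.exp (-x ^ 2) * ((16*x^8 - 105) / (16*x^8))) x :=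
    fun x hx => hasDerivAt_neg_Bl x (ne_of_gt (lt_of_lt_of_le ht0 hx))
  have hnum : ∀ x : ℝ, 2 ≤ x → (0:ℝ) ≤ 16*x^8 - 105 := by
    intro x hx
    have : (2:ℝ)^8 ≤ x^8 := pow_le_pow_left₀ (by norm_num) hx 8
    nlinarith
  have hpos : ∀ x ∈ Set.Ioi t, 0 ≤ Real.exp (-x ^ 2) * ((16*x^8 - 105) / (16*x^8)) := by
    intro x hx
    have hx2 : 2 ≤ x := le_of_lt (lt_of_le_of_lt ht hx)
    have hx0 : 0 < x := lt_of_lt_of_le two_pos hx2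
    exact mul_nonneg (Real.exp_pos _).le (div_nonneg (hnum x hx2) (by positivity))
  have htend : Filter.Tendsto (fun s => -(Bl s)) Filter.atTop (nhds 0) := by
    simpa using tendsto_Bl.neg
  have hkey := integral_Ioi_of_hasDerivAt_of_nonneg' hderiv hpos htend
  have hint : IntegrableOn (fun x => Real.exp (-x ^ 2) * ((16*x^8 - 105) / (16*x^8)))
      (Set.Ioi t) := integrableOn_Ioi_deriv_of_nonneg' hderiv hpos htend
  have hmono : (∫ x in Set.Ioi t, Real.exp (-x ^ 2) * ((16*x^8 - 105) / (16*x^8))) ≤ Ig t := by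
    apply setIntegral_mono_on hint gint.integrableOn measurableSet_Ioi
    intro x hx
    have hx0 : 0 < x := ht0.trans hx
    have : (16*x^8 - 105) / (16*x^8) ≤ 1 := by
      rw [div_le_one (by positivity)]
      nlinarith
    nlinarith [Real.exp_pos (-x^2), mul_le_mul_of_nonneg_left this (Real.exp_pos (-x^2)).le]
  rw [hkey] at hmono
  simpa using hmono

lemma u_upper (t : ℝ) (ht : 0 < t) :
    Real.exp (t^2) * Ig t ≤ (4*t^4 - 2*t^2 + 3) / (8*t^5) := by
  have h := mul_le_mul_of_nonneg_left (Ig_le_Au t ht) (Real.exp_pos (t^2)).le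
  rw [Au, ← mul_assoc, ← Real.exp_add] at h
  simpa using h

lemma u_lower (t : ℝ) (ht : 2 ≤ t) :
    (8*t^6 - 4*t^4 + 6*t^2 - 15) / (16*t^7) ≤ Real.exp (t^2) * Ig t := by
  have h := mul_le_mul_of_nonneg_left (Bl_le_Ig t ht) (Real.exp_pos (t^2)).le
  rw [Bl, ← mul_assoc, ← Real.exp_add] at h
  simpa using h

lemma est1 (t : ℝ) (ht : 2 ≤ t) :
    |(t^3 - t) - (2*t^4 - t^2 + 1) * (Real.exp (t^2) * Ig t)| ≤ 2/t := by
  have ht0 : (0:ℝ) < t := lt_of_lt_of_le two_pos ht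
  have hc : (0:ℝ) ≤ 2*t^4 - t^2 + 1 := by nlinarith [sq_nonneg (t^2 - 1), sq_nonneg t]
  rw [abs_le]
  constructor
  · have h1 := mul_le_mul_of_nonneg_left (u_upper t ht0) hc
    have key : (t^3 - t) - (2*t^4 - t^2 + 1) * ((4*t^4 - 2*t^2 + 3) / (8*t^5))
        = (-(12*t^4 - 5*t^2 + 3)) / (8*t^5) := by
      field_simp
      ring
    have hfrac : -(2/t) ≤ (-(12*t^4 - 5*t^2 + 3)) / (8*t^5) := by
      rw [neg_div, neg_le_neg_iff, div_le_div_iff₀ (by positivity) ht0]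
      nlinarith [sq_nonneg t, pow_pos ht0 3, pow_pos ht0 5]
    linarith [key ▸ hfrac]
  · have h1 := mul_le_mul_of_nonneg_left (u_lower t ht) hc
    have key : (t^3 - t) - (2*t^4 - t^2 + 1) * ((8*t^6 - 4*t^4 + 6*t^2 - 15) / (16*t^7))
        = (-24*t^6 + 40*t^4 - 21*t^2 + 15) / (16*t^7) := by
      field_simp
      ring
    have hfrac : (-24*t^6 + 40*t^4 - 21*t^2 + 15) / (16*t^7) ≤ 2/t := by
      rw [div_le_div_iff₀ (by positivity) ht0]
      have h4 : (4:ℝ) ≤ t^2 := by nlinarith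
      nlinarith [pow_pos ht0 7, pow_pos ht0 3,
        mul_le_mul_of_nonneg_left h4 (pow_nonneg ht0.le 5),
        mul_le_mul_of_nonneg_left h4 (pow_nonneg ht0.le 1)]
    linarith [key ▸ hfrac]

lemma est2 (t : ℝ) (ht : 2 ≤ t) :
    |t*(t^2 + 1) - t^2*(2*t^2 + 3) * (Real.exp (t^2) * Ig t)| ≤ 2/t^3 := by
  have ht0 : (0:ℝ) < t := lt_of_lt_of_le two_pos ht
  have hc : (0:ℝ) ≤ t^2*(2*t^2 + 3) := by positivity
  rw [abs_le]
  constructor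
  · have h1 := mul_le_mul_of_nonneg_left (u_upper t ht0) hc
    have key : t*(t^2 + 1) - t^2*(2*t^2 + 3) * ((4*t^4 - 2*t^2 + 3) / (8*t^5))
        = (-(9:ℝ)) / (8*t^3) := by
      field_simp
      ring
    have hfrac : -(2/t^3) ≤ (-(9:ℝ)) / (8*t^3) := by
      rw [neg_div, neg_le_neg_iff, div_le_div_iff₀ (by positivity) (by positivity)]
      nlinarith [pow_pos ht0 3]
    linarith [key ▸ hfrac]
  · have h1 := mul_le_mul_of_nonneg_left (u_lower t ht) hc
    have key : t*(t^2 + 1) - t^2*(2*t^2 + 3) * ((8*t^6 - 4*t^4 + 6*t^2 - 15) / (16*t^7))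
        = (12*t^2 + 45) / (16*t^5) := by
      field_simp
      ring
    have hfrac : (12*t^2 + 45) / (16*t^5) ≤ 2/t^3 := by
      rw [div_le_div_iff₀ (by positivity) (by positivity)]
      nlinarith [pow_pos ht0 5, pow_pos ht0 3, sq_nonneg t]
    linarith [key ▸ hfrac]

noncomputable def Fa (X : ℝ) : ℝ :=
  -(Real.exp X * (2*X^2 - X + 1) * (1 - erf (Real.sqrt X))) +
    2 / Real.sqrt π * (Real.sqrt X * (X - 1))

lemma continuous_Fa : Continuous Fa := by
  unfold Fa
  have h1 : Continuous fun X : ℝ => erf (Real.sqrt X) :=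
    continuous_erf.comp Real.continuous_sqrt
  fun_prop

lemma Fa_zero : Fa 0 = -1 := by
  simp [Fa, erf, Real.sqrt_zero]

lemma Fa_hasDerivAt (s : ℝ) (hs : 0 < s) :
    HasDerivAt Fa
      ((1 / Real.sqrt π) *
        (2 * Real.sqrt (s^2) * (s^2 + 1) -
          Real.exp (s^2) * Real.sqrt π * (s^2) * (2 * (s^2) + 3) *
            (1 - erf (Real.sqrt (s^2))))) (s^2) := by
  have hπ : Real.sqrt π ≠ 0 := by positivity
  have hs0 : s ≠ 0 := hs.ne'
  have hsq : Real.sqrt (s^2) = s := Real.sqrt_sq hs.le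
  have hsqrt : HasDerivAt Real.sqrt (1 / (2 * s)) (s^2) := by
    have := Real.hasDerivAt_sqrt (by positivity : (s:ℝ)^2 ≠ 0)
    rwa [hsq] at this
  have herf : HasDerivAt (fun Y => erf (Real.sqrt Y))
      ((2 / Real.sqrt π * Real.exp (-s ^ 2)) * (1 / (2 * s))) (s^2) := by
    have he := erf_hasDerivAt s
    rw [← hsq] at he
    have h := he.comp (s^2) hsqrt
    rw [hsq] at h
    exact h
  have hone : HasDerivAt (fun Y => 1 - erf (Real.sqrt Y))
      (-((2 / Real.sqrt π * Real.exp (-s ^ 2)) * (1 / (2 * s)))) (s^2) := by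
    exact ((hasDerivAt_const (s^2) (1:ℝ)).sub herf).congr_deriv (zero_sub _)
  have hexp : HasDerivAt Real.exp (Real.exp (s^2)) (s^2) := Real.hasDerivAt_exp (s^2)
  have hpoly : HasDerivAt (fun Y : ℝ => 2*Y^2 - Y + 1) (4*s^2 - 1) (s^2) := by
    have := (((hasDerivAt_pow 2 (s^2)).const_mul 2).sub (hasDerivAt_id (s^2))).add_const 1
    refine this.congr_deriv ?_
    push_cast
    ring
  have h1 : HasDerivAt (fun Y => Real.exp Y * (2*Y^2 - Y + 1))
      (Real.exp (s^2) * (2*(s^2)^2 - s^2 + 1) + Real.exp (s^2) * (4*s^2 - 1)) (s^2) :=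
    hexp.mul hpoly
  have h2 : HasDerivAt (fun Y => Real.exp Y * (2*Y^2 - Y + 1) * (1 - erf (Real.sqrt Y)))
      ((Real.exp (s^2) * (2*(s^2)^2 - s^2 + 1) + Real.exp (s^2) * (4*s^2 - 1)) *
          (1 - erf (Real.sqrt (s^2))) +
        Real.exp (s^2) * (2*(s^2)^2 - s^2 + 1) *
          (-((2 / Real.sqrt π * Real.exp (-s ^ 2)) * (1 / (2 * s))))) (s^2) :=
    h1.mul hone
  have h3 : HasDerivAt (fun Y => Real.sqrt Y * (Y - 1))
      ((1 / (2 * s)) * (s^2 - 1) + Real.sqrt (s^2) * 1) (s^2) :=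
    hsqrt.mul ((hasDerivAt_id (s^2)).sub_const 1)
  have h4 := (h2.neg).add (h3.const_mul (2 / Real.sqrt π))
  have h5 : HasDerivAt Fa
      (-((Real.exp (s^2) * (2*(s^2)^2 - s^2 + 1) + Real.exp (s^2) * (4*s^2 - 1)) *
          (1 - erf (Real.sqrt (s^2))) +
        Real.exp (s^2) * (2*(s^2)^2 - s^2 + 1) *
          (-((2 / Real.sqrt π * Real.exp (-s ^ 2)) * (1 / (2 * s))))) +
        2 / Real.sqrt π * ((1 / (2 * s)) * (s^2 - 1) + Real.sqrt (s^2) * 1)) (s^2) := by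
    exact h4
  convert h5 using 1
  rw [hsq, Real.exp_neg]
  have hE : Real.exp (s^2) ≠ 0 := Real.exp_ne_zero _
  field_simp
  ring

lemma Fa_eq (s : ℝ) (hs : 0 < s) :
    Fa (s^2) = 2 / Real.sqrt π *
      ((s^3 - s) - (2*s^4 - s^2 + 1) * (Real.exp (s^2) * Ig s)) := by
  have hπ : Real.sqrt π ≠ 0 := by positivity
  simp only [Fa, Real.sqrt_sq hs.le, one_sub_erf s hs.le]
  field_simp
  ring

lemma integrand_eq (s : ℝ) (hs : 0 < s) :
    (1 / Real.sqrt π) *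
        (2 * Real.sqrt (s^2) * (s^2 + 1) -
          Real.exp (s^2) * Real.sqrt π * (s^2) * (2 * (s^2) + 3) *
            (1 - erf (Real.sqrt (s^2)))) =
      2 / Real.sqrt π * (s*(s^2 + 1) - s^2*(2*s^2 + 3) * (Real.exp (s^2) * Ig s)) := by
  have hπ : Real.sqrt π ≠ 0 := by positivity
  simp only [Real.sqrt_sq hs.le, one_sub_erf s hs.le]
  field_simp

lemma sqrtπ_ge : (4/3 : ℝ) ≤ Real.sqrt π := by
  have h : Real.sqrt ((4/3)^2) ≤ Real.sqrt π :=
    Real.sqrt_le_sqrt (by nlinarith [Real.pi_gt_three])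
  rwa [Real.sqrt_sq (by norm_num : (0:ℝ) ≤ 4/3)] at h

lemma coef_le : 2 / Real.sqrt π ≤ 3/2 := by
  have h := sqrtπ_ge
  rw [div_le_div_iff₀ (by positivity) (by norm_num)]
  linarith

lemma tendsto_Fa : Filter.Tendsto Fa Filter.atTop (nhds 0) := by
  have hsq : Filter.Tendsto Real.sqrt Filter.atTop Filter.atTop := by
    apply Filter.tendsto_atTop_atTop.2
    intro b
    refine ⟨(max b 0)^2, fun a ha => ?_⟩
    calc b ≤ max b 0 := le_max_left _ _
      _ = Real.sqrt ((max b 0)^2) := (Real.sqrt_sq (le_max_right _ _)).symm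
      _ ≤ Real.sqrt a := Real.sqrt_le_sqrt ha
  have hdiv : Filter.Tendsto (fun X : ℝ => 3 / Real.sqrt X) Filter.atTop (nhds 0) :=
    Filter.Tendsto.div_atTop tendsto_const_nhds hsq
  refine squeeze_zero_norm' ?_ hdiv
  filter_upwards [Filter.eventually_ge_atTop (4:ℝ)] with X hX4
  have hX0 : (0:ℝ) < X := by linarith
  have ht2 : 2 ≤ Real.sqrt X := by
    have h4 : Real.sqrt 4 = 2 := by
      rw [show (4:ℝ) = 2^2 by norm_num]
      exact Real.sqrt_sq (by norm_num)
    calc (2:ℝ) = Real.sqrt 4 := h4.symm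
      _ ≤ Real.sqrt X := Real.sqrt_le_sqrt hX4
  obtain ⟨t, ht2', rfl⟩ : ∃ t, 2 ≤ t ∧ t^2 = X := ⟨Real.sqrt X, ht2, Real.sq_sqrt hX0.le⟩
  have ht0 : (0:ℝ) < t := by linarith
  rw [Fa_eq t ht0, Real.sqrt_sq ht0.le]
  have hest := est1 t ht2'
  have h1 : ‖2 / Real.sqrt π *
      ((t^3 - t) - (2*t^4 - t^2 + 1) * (Real.exp (t^2) * Ig t))‖
      = 2 / Real.sqrt π * |(t^3 - t) - (2*t^4 - t^2 + 1) * (Real.exp (t^2) * Ig t)| := by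
    rw [Real.norm_eq_abs, abs_mul, abs_of_pos (by positivity : (0:ℝ) < 2 / Real.sqrt π)]
  rw [h1]
  calc 2 / Real.sqrt π * |(t^3 - t) - (2*t^4 - t^2 + 1) * (Real.exp (t^2) * Ig t)|
      ≤ (3/2) * (2/t) := by
        apply mul_le_mul coef_le hest (abs_nonneg _) (by norm_num)
    _ = 3 / t := by ring

lemma rpow_eq_cube_inv (t : ℝ) (ht0 : 0 < t) : ((t:ℝ)^2) ^ (-(3/2) : ℝ) = (t^3)⁻¹ := by
  rw [← Real.rpow_natCast t 2, ← Real.rpow_mul ht0.le]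
  rw [show ((2:ℕ):ℝ) * -(3/2) = ((-3 : ℤ) : ℝ) by push_cast; norm_num]
  rw [Real.rpow_intCast]
  simp only [zpow_neg]
  norm_cast

lemma integrand_bound (X : ℝ) (hX : 4 ≤ X) :
    ‖(1 / Real.sqrt π) *
        (2 * Real.sqrt X * (X + 1) -
          Real.exp X * Real.sqrt π * X * (2 * X + 3) * (1 - erf (Real.sqrt X)))‖
      ≤ 3 * X ^ (-(3/2) : ℝ) := by
  have hX0 : (0:ℝ) < X := by linarith
  have ht2 : 2 ≤ Real.sqrt X := by
    have h4 : Real.sqrt 4 = 2 := by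
      rw [show (4:ℝ) = 2^2 by norm_num]
      exact Real.sqrt_sq (by norm_num)
    calc (2:ℝ) = Real.sqrt 4 := h4.symm
      _ ≤ Real.sqrt X := Real.sqrt_le_sqrt hX
  obtain ⟨t, ht2', rfl⟩ : ∃ t, 2 ≤ t ∧ t^2 = X := ⟨Real.sqrt X, ht2, Real.sq_sqrt hX0.le⟩
  have ht0 : (0:ℝ) < t := by linarith
  rw [integrand_eq t ht0, rpow_eq_cube_inv t ht0]
  have hest := est2 t ht2'
  have h1 : ‖2 / Real.sqrt π *
      (t*(t^2 + 1) - t^2*(2*t^2 + 3) * (Real.exp (t^2) * Ig t))‖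
      = 2 / Real.sqrt π * |t*(t^2 + 1) - t^2*(2*t^2 + 3) * (Real.exp (t^2) * Ig t)| := by
    rw [Real.norm_eq_abs, abs_mul, abs_of_pos (by positivity : (0:ℝ) < 2 / Real.sqrt π)]
  rw [h1]
  calc 2 / Real.sqrt π * |t*(t^2 + 1) - t^2*(2*t^2 + 3) * (Real.exp (t^2) * Ig t)|
      ≤ (3/2) * (2/t^3) := by
        apply mul_le_mul coef_le hest (abs_nonneg _) (by norm_num)
    _ = 3 * (t^3)⁻¹ := by ring

lemma integrand_cont : Continuous (fun X : ℝ => (1 / Real.sqrt π) *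
    (2 * Real.sqrt X * (X + 1) -
      Real.exp X * Real.sqrt π * X * (2 * X + 3) * (1 - erf (Real.sqrt X)))) := by
  have h1 : Continuous fun X : ℝ => erf (Real.sqrt X) :=
    continuous_erf.comp Real.continuous_sqrt
  fun_prop

lemma integrand_integrable : IntegrableOn (fun X : ℝ => (1 / Real.sqrt π) *
    (2 * Real.sqrt X * (X + 1) -
      Real.exp X * Real.sqrt π * X * (2 * X + 3) * (1 - erf (Real.sqrt X))))
    (Set.Ioi (0:ℝ)) := by
  rw [← Set.Ioc_union_Ioi_eq_Ioi (by norm_num : (0:ℝ) ≤ 4), integrableOn_union]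
  constructor
  · exact integrand_cont.integrableOn_Ioc
  · refine Integrable.mono' (g := fun X => 3 * X ^ (-(3/2) : ℝ))
      ((integrableOn_Ioi_rpow_of_lt (by norm_num) (by norm_num : (0:ℝ) < 4)).const_mul 3)
      (integrand_cont.aestronglyMeasurable.restrict) ?_
    rw [ae_restrict_iff' measurableSet_Ioi]
    exact ae_of_all _ fun X hX => integrand_bound X (le_of_lt hX)

theorem density_in_rescaled_integrates_to_one :
    ∫ X in Set.Ioi (0 : ℝ),
      (1 / Real.sqrt π) *
        (2 * Real.sqrt X * (X + 1) -
          Real.exp X * Real.sqrt π * X * (2 * X + 3) * (1 - erf (Real.sqrt X))) = 1 := by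
  have hderiv : ∀ X ∈ Set.Ioi (0:ℝ), HasDerivAt Fa
      ((1 / Real.sqrt π) *
        (2 * Real.sqrt X * (X + 1) -
          Real.exp X * Real.sqrt π * X * (2 * X + 3) * (1 - erf (Real.sqrt X)))) X := by
    intro X hX
    have hX0 : (0:ℝ) < X := hX
    have h := Fa_hasDerivAt (Real.sqrt X) (Real.sqrt_pos.2 hX0)
    rwa [Real.sq_sqrt hX0.le] at h
  have key := integral_Ioi_of_hasDerivAt_of_tendsto
    continuous_Fa.continuousWithinAt hderiv integrand_integrable tendsto_Fa
  rw [key, Fa_zero]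
  norm_num
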